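/- Let w : ℝ³ → ℝ³ be continuously differentiable with div w(x) = 0 for all x ∈ ℝ³, and let u : ℝ³ → ℝ³ be continuously differentiable with compact support. Then ∫_{ℝ³} ((curl w)(x) × w(x)) · u(x) dx = ½ ∫_{ℝ³} |w(x)|² (div u)(x) dx − ∫_{ℝ³} w(x) · (Du(x)(w(x))) dx, all integrals being finite. -/

import Mathlib

open scoped RealInnerProductSpace
open MeasureTheory

noncomputable section

/-- Three-dimensional Euclidean space. -/
abbrev E3 : Type := EuclideanSpace ℝ (Fin 3)

/-- Cross product of vectors in `E3`. -/
def cross (a b : E3) : E3 :=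
  WithLp.toLp 2 ![a 1 * b 2 - a 2 * b 1, a 2 * b 0 - a 0 * b 2, a 0 * b 1 - a 1 * b 0]

/-- Divergence of a vector field: trace of the Jacobian,
`div v (x) = ∑ i, ∂ᵢ vᵢ (x)`. -/
def vdiv (v : E3 → E3) (x : E3) : ℝ :=
  ∑ i, fderiv ℝ v x (EuclideanSpace.single i 1) i

/-- Curl of a vector field (with 0-indexed coordinates):
`curl v = (∂₁v₂ − ∂₂v₁, ∂₂v₀ − ∂₀v₂, ∂₀v₁ − ∂₁v₀)`. -/
def curl (v : E3 → E3) (x : E3) : E3 :=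
  WithLp.toLp 2 ![fderiv ℝ v x (EuclideanSpace.single 1 1) 2 - fderiv ℝ v x (EuclideanSpace.single 2 1) 1,
    fderiv ℝ v x (EuclideanSpace.single 2 1) 0 - fderiv ℝ v x (EuclideanSpace.single 0 1) 2,
    fderiv ℝ v x (EuclideanSpace.single 0 1) 1 - fderiv ℝ v x (EuclideanSpace.single 1 1) 0]

/-- Divergence theorem on `ℝ³` (pi version): the integral of the divergence of a compactly
supported `C¹` vector field vanishes. -/
lemma pi_div_integral_zero (V : (Fin 3 → ℝ) → (Fin 3 → ℝ))
    (V' : (Fin 3 → ℝ) → (Fin 3 → ℝ) →L[ℝ] (Fin 3 → ℝ))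
    (hd : ∀ x, HasFDerivAt V (V' x) x)
    (h'c : Continuous fun x => ∑ i, V' x (Pi.single i 1) i)
    (hVs : HasCompactSupport V) (hV's : HasCompactSupport V') :
    ∫ x, ∑ i, V' x (Pi.single i 1) i = 0 := by
  obtain ⟨R, hR0, hR⟩ : ∃ R > 0, tsupport V ∪ tsupport V' ⊆ Metric.ball (0 : Fin 3 → ℝ) R :=
    ((hVs.isCompact.union hV's.isCompact).isBounded).subset_ball_lt 0 0
  set a : Fin 3 → ℝ := fun _ => -R with ha
  set b : Fin 3 → ℝ := fun _ => R with hb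
  have hnorm : ∀ x : Fin 3 → ℝ, (∃ i, R ≤ |x i|) → x ∉ tsupport V ∪ tsupport V' := by
    rintro x ⟨i, hi⟩ hx
    have h1 : ‖x‖ < R := by simpa [dist_zero_right] using hR hx
    have h2 : |x i| ≤ ‖x‖ := by simpa using norm_le_pi_norm x i
    linarith
  have hcompl : ∀ x ∉ Set.Icc a b, (∑ i, V' x (Pi.single i 1) i) = 0 := by
    intro x hx
    have hex : ∃ i, R ≤ |x i| := by
      by_contra h
      push_neg at h
      refine hx ⟨fun i => ?_, fun i => ?_⟩
      · have := abs_lt.1 (h i); simp [ha]; linarith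
      · have := abs_lt.1 (h i); simp [hb]; linarith
    have : V' x = 0 := image_eq_zero_of_notMem_tsupport (fun h => hnorm x hex (Or.inr h))
    simp [this]
  rw [← setIntegral_eq_integral_of_forall_compl_eq_zero hcompl]
  have hle : a ≤ b := fun i => by simp [ha, hb]; linarith
  rw [integral_divergence_of_hasFDerivAt_off_countable a b hle V V' ∅ Set.countable_empty
      (fun x _ => (hd x).continuousAt.continuousWithinAt)
      (fun x hx => hd x)
      ((h'c.continuousOn).integrableOn_compact isCompact_Icc)]
  apply Finset.sum_eq_zero
  intro i _
  have hface : ∀ (c : ℝ), R ≤ |c| → ∀ y : Fin 2 → ℝ, V (i.insertNth c y) = 0 := by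
    intro c hc y
    refine image_eq_zero_of_notMem_tsupport fun h => hnorm _ ⟨i, ?_⟩ (Or.inl h)
    simpa [Fin.insertNth_apply_same] using hc
  have h1 : R ≤ |b i| := by simp [hb, abs_of_pos hR0]
  have h2 : R ≤ |a i| := by simp [ha, abs_of_pos hR0]
  simp [hface _ h1, hface _ h2]

/-- Divergence theorem on `E3`: the integral of the divergence of a compactly supported `C¹`
vector field vanishes. -/
lemma e3_div_integral_zero (G : E3 → E3) (hG : ContDiff ℝ 1 G) (hGs : HasCompactSupport G) :
    ∫ x : E3, ∑ i, fderiv ℝ G x (EuclideanSpace.single i 1) i = 0 := by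
  set e := EuclideanSpace.equiv (Fin 3) ℝ with he
  set V : (Fin 3 → ℝ) → (Fin 3 → ℝ) := fun y => e (G (e.symm y)) with hV
  set V' : (Fin 3 → ℝ) → (Fin 3 → ℝ) →L[ℝ] (Fin 3 → ℝ) := fun y =>
    (e : E3 →L[ℝ] (Fin 3 → ℝ)).comp ((fderiv ℝ G (e.symm y)).comp
      (e.symm : (Fin 3 → ℝ) →L[ℝ] E3)) with hV'
  have hGd : Differentiable ℝ G := hG.differentiable one_ne_zero
  have hd : ∀ y, HasFDerivAt V (V' y) y := fun y =>
    ((e : E3 →L[ℝ] (Fin 3 → ℝ)).hasFDerivAt.comp _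
      ((hGd (e.symm y)).hasFDerivAt.comp _ (e.symm : (Fin 3 → ℝ) →L[ℝ] E3).hasFDerivAt))
  have hsingle : ∀ i : Fin 3,
      (e.symm : (Fin 3 → ℝ) →L[ℝ] E3) (Pi.single i 1) = EuclideanSpace.single i 1 :=
    fun i => rfl
  have happ : ∀ y, (∑ i, V' y (Pi.single i 1) i)
      = ∑ i, fderiv ℝ G (e.symm y) (EuclideanSpace.single i 1) i := by
    intro y
    refine Finset.sum_congr rfl fun i _ => ?_
    simp [hV', hsingle i]
    rfl
  have hfc : Continuous fun x : E3 => ∑ i, fderiv ℝ G x (EuclideanSpace.single i 1) i := by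
    refine continuous_finset_sum _ fun i _ => ?_
    exact (continuous_apply (i : Fin 3)).comp ((PiLp.continuous_ofLp 2 _).comp ((hG.continuous_fderiv one_ne_zero).clm_apply
      continuous_const))
  have h'c : Continuous fun y => ∑ i, V' y (Pi.single i 1) i := by
    simp only [happ]
    exact hfc.comp (e.symm.continuous)
  have hVs : HasCompactSupport V := by
    have h1 : HasCompactSupport (fun y => G (e.symm y)) := hGs.comp_homeomorph e.symm.toHomeomorph
    exact h1.comp_left (g := e) (map_zero e)
  have hV's : HasCompactSupport V' := by
    have h1 : HasCompactSupport (fderiv ℝ G) := hGs.fderiv ℝ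
    have h2 : HasCompactSupport (fun y => fderiv ℝ G (e.symm y)) :=
      h1.comp_homeomorph e.symm.toHomeomorph
    apply HasCompactSupport.mono' h2
    intro y hy
    simp only [Function.mem_support, hV'] at hy
    have : fderiv ℝ G (e.symm y) ≠ 0 := by
      intro h; apply hy; simp [h]
    exact subset_tsupport _ this
  have key := pi_div_integral_zero V V' hd h'c hVs hV's
  rw [show (∫ x : E3, ∑ i, fderiv ℝ G x (EuclideanSpace.single i 1) i)
      = ∫ y : Fin 3 → ℝ, ∑ i, fderiv ℝ G (e.symm y) (EuclideanSpace.single i 1) i from ?_, ← key]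
  · exact (integral_congr_ae (Filter.Eventually.of_forall fun y => (happ y).symm)).symm
  · have hmp := (EuclideanSpace.volume_preserving_symm_measurableEquiv_toLp (Fin 3)).symm
    rw [← hmp.integral_comp (MeasurableEquiv.measurableEmbedding _)]
    rfl

/-- For `w` continuously differentiable and divergence-free and `u`
continuously differentiable with compact support,
`∫ ((curl w) × w) · u = ½ ∫ |w|² div u − ∫ w · (Du)(w)`, all integrals being finite. -/
theorem integral_curl_cross_inner_eq
    (w u : E3 → E3) (hw : ContDiff ℝ 1 w) (hwdiv : ∀ x, vdiv w x = 0)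
    (hu : ContDiff ℝ 1 u) (husupp : HasCompactSupport u) :
    Integrable (fun x => ⟪cross (curl w x) (w x), u x⟫) ∧
    Integrable (fun x => ‖w x‖ ^ 2 * vdiv u x) ∧
    Integrable (fun x => ⟪w x, fderiv ℝ u x (w x)⟫) ∧
    ∫ x, ⟪cross (curl w x) (w x), u x⟫
      = (1 / 2) * (∫ x, ‖w x‖ ^ 2 * vdiv u x) - ∫ x, ⟪w x, fderiv ℝ u x (w x)⟫ := by
  have hWc : Continuous (fderiv ℝ w) := hw.continuous_fderiv one_ne_zero
  have hUc : Continuous (fderiv ℝ u) := hu.continuous_fderiv one_ne_zero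
  have husuppF : HasCompactSupport (fderiv ℝ u) := husupp.fderiv ℝ
  -- the auxiliary field G with `div G = (curl w × w)·u + ⟪w, Du w⟫ − ½|w|² div u`
  set G : E3 → E3 := fun y => ⟪w y, u y⟫ • w y - ((1/2 : ℝ) * ⟪w y, w y⟫) • u y with hGdef
  have hGc1 : ContDiff ℝ 1 G :=
    ((ContDiff.inner ℝ hw hu).smul hw).sub ((contDiff_const.mul (ContDiff.inner ℝ hw hw)).smul hu)
  have hGs : HasCompactSupport G := by
    apply husupp.mono'
    intro x hx
    apply subset_tsupport
    intro hux
    apply hx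
    simp [hGdef, hux]
  set G' : E3 → E3 →L[ℝ] E3 := fun x =>
      ((⟪w x, u x⟫ • fderiv ℝ w x +
        ((fderivInnerCLM ℝ (w x, u x)).comp ((fderiv ℝ w x).prod (fderiv ℝ u x))).smulRight (w x))
       - (((1/2 : ℝ) * ⟪w x, w x⟫) • fderiv ℝ u x +
        ((1/2 : ℝ) • ((fderivInnerCLM ℝ (w x, w x)).comp
          ((fderiv ℝ w x).prod (fderiv ℝ w x)))).smulRight (u x))) with hG'def
  have hG' : ∀ x, HasFDerivAt G (G' x) x := by
    intro x
    have hW := (hw.differentiable one_ne_zero x).hasFDerivAt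
    have hU := (hu.differentiable one_ne_zero x).hasFDerivAt
    exact ((HasFDerivAt.inner ℝ hW hU).smul hW).sub
      (((HasFDerivAt.inner ℝ hW hW).const_mul (1/2 : ℝ)).smul hU)
  have hfd : ∀ x, fderiv ℝ G x = G' x := fun x => (hG' x).fderiv
  -- the pointwise identity
  have hpt : ∀ x, ⟪cross (curl w x) (w x), u x⟫ =
      (∑ i, fderiv ℝ G x (EuclideanSpace.single i 1) i)
        + (1/2) * (‖w x‖ ^ 2 * vdiv u x) - ⟪w x, fderiv ℝ u x (w x)⟫ := by
    intro x
    rw [hfd x]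
    have hdiv : fderiv ℝ w x (EuclideanSpace.single 0 1) 0
        + fderiv ℝ w x (EuclideanSpace.single 1 1) 1
        + fderiv ℝ w x (EuclideanSpace.single 2 1) 2 = 0 := by
      simpa [vdiv, Fin.sum_univ_three] using hwdiv x
    have hwx : w x = w x 0 • EuclideanSpace.single 0 (1:ℝ) + w x 1 • EuclideanSpace.single 1 1
        + w x 2 • EuclideanSpace.single 2 1 := by
      ext i; fin_cases i <;> simp [EuclideanSpace.single_apply]
    have hUw : fderiv ℝ u x (w x) = w x 0 • fderiv ℝ u x (EuclideanSpace.single 0 1)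
        + w x 1 • fderiv ℝ u x (EuclideanSpace.single 1 1)
        + w x 2 • fderiv ℝ u x (EuclideanSpace.single 2 1) := by
      conv_lhs => rw [hwx]
      simp [map_add, _root_.map_smul]
    rw [← real_inner_self_eq_norm_sq, hUw, hG'def]
    simp only [cross, curl, vdiv, PiLp.inner_apply, RCLike.inner_apply, conj_trivial,
      Fin.sum_univ_three, ContinuousLinearMap.sub_apply, ContinuousLinearMap.add_apply,
      ContinuousLinearMap.smul_apply, ContinuousLinearMap.smulRight_apply,
      ContinuousLinearMap.comp_apply, ContinuousLinearMap.prod_apply, fderivInnerCLM_apply,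
      PiLp.add_apply, PiLp.sub_apply, PiLp.smul_apply, smul_eq_mul,
      Matrix.cons_val_zero, Matrix.cons_val_one, Matrix.head_cons, Matrix.cons_val_two,
      Matrix.tail_cons]
    linear_combination (-(w x 0 * u x 0 + w x 1 * u x 1 + w x 2 * u x 2)) * hdiv
  -- continuity and integrability of all pieces
  have hdivGc : Continuous (fun x => ∑ i, fderiv ℝ G x (EuclideanSpace.single i 1) i) := by
    refine continuous_finset_sum _ fun i _ => ?_
    exact (continuous_apply (i : Fin 3)).comp
      ((PiLp.continuous_ofLp 2 _).comp ((hGc1.continuous_fderiv one_ne_zero).clm_apply continuous_const))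
  have hdivG_int : Integrable (fun x => ∑ i, fderiv ℝ G x (EuclideanSpace.single i 1) i) := by
    refine hdivGc.integrable_of_hasCompactSupport ((hGs.fderiv ℝ).mono' ?_)
    intro x hx
    apply subset_tsupport
    intro h
    apply hx
    simp [h]
  have ht2c : Continuous (fun x => ‖w x‖ ^ 2 * vdiv u x) := by
    refine ((hw.continuous.norm.pow 2)).mul ?_
    refine continuous_finset_sum _ fun i _ => ?_
    exact (continuous_apply (i : Fin 3)).comp ((PiLp.continuous_ofLp 2 _).comp (hUc.clm_apply continuous_const))
  have ht2_int : Integrable (fun x => ‖w x‖ ^ 2 * vdiv u x) := by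
    refine ht2c.integrable_of_hasCompactSupport (husuppF.mono' ?_)
    intro x hx
    apply subset_tsupport
    intro h
    apply hx
    simp [vdiv, h]
  have ht3c : Continuous (fun x => ⟪w x, fderiv ℝ u x (w x)⟫) :=
    hw.continuous.inner (hUc.clm_apply hw.continuous)
  have ht3_int : Integrable (fun x => ⟪w x, fderiv ℝ u x (w x)⟫) := by
    refine ht3c.integrable_of_hasCompactSupport (husuppF.mono' ?_)
    intro x hx
    apply subset_tsupport
    intro h
    apply hx
    simp [h]
  have hLHSeq : (fun x => ⟪cross (curl w x) (w x), u x⟫)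
      = fun x => (∑ i, fderiv ℝ G x (EuclideanSpace.single i 1) i)
          + (1/2) * (‖w x‖ ^ 2 * vdiv u x) - ⟪w x, fderiv ℝ u x (w x)⟫ := funext hpt
  have hLHS_int : Integrable (fun x => ⟪cross (curl w x) (w x), u x⟫) := by
    rw [hLHSeq]
    exact (hdivG_int.add ((ht2_int.const_mul (1/2 : ℝ)))).sub ht3_int
  refine ⟨hLHS_int, ht2_int, ht3_int, ?_⟩
  have h12 : Integrable (fun x => (∑ i, fderiv ℝ G x (EuclideanSpace.single i 1) i)
      + (1/2) * (‖w x‖ ^ 2 * vdiv u x)) := by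
    exact hdivG_int.add (ht2_int.const_mul (1/2 : ℝ))
  have h2' : Integrable (fun x => (1/2 : ℝ) * (‖w x‖ ^ 2 * vdiv u x)) := by
    exact ht2_int.const_mul (1/2 : ℝ)
  rw [hLHSeq,
    integral_sub (f := fun x => (∑ i, fderiv ℝ G x (EuclideanSpace.single i 1) i)
      + (1/2) * (‖w x‖ ^ 2 * vdiv u x))
      (g := fun x => ⟪w x, fderiv ℝ u x (w x)⟫) h12 ht3_int,
    integral_add (f := fun x => (∑ i, fderiv ℝ G x (EuclideanSpace.single i 1) i))
      (g := fun x => (1/2 : ℝ) * (‖w x‖ ^ 2 * vdiv u x)) hdivG_int h2',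
    e3_div_integral_zero G hGc1 hGs, integral_const_mul, zero_add]

end
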